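/- Let L be a finite geometric lattice with rank function ρ. For all x ≤ y in L there exists z ∈ L with z ∨ x = y and ρ(z) = ρ(y) − ρ(x). Consequently, writing R_L(x,y) = Σ_{z : z∨x=y} t^{ρ(z)}, the power t^{ρ(y)−ρ(x)+1} does not divide R_L(x,y). -/

import Mathlib

open scoped Classical in
/-- `R_L(u,v) = Σ_{z : z ⊔ u = v} t^{ρ z}`, as a polynomial in `t`. -/
noncomputable def RL {L : Type*} [Lattice L] [Fintype L] (ρ : L → ℕ) (u v : L) :
    Polynomial ℤ :=
  ∑ z ∈ Finset.univ.filter (fun z : L => z ⊔ u = v), Polynomial.X ^ ρ z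

section Aux
variable {L : Type*} [Lattice L] [Fintype L] [OrderBot L]

/-- In a finite lattice, above any `u < v` there is a cover of `u` below `v`. -/
lemma exists_covBy_le (u v : L) (huv : u < v) : ∃ w : L, u ⋖ w ∧ w ≤ v := by
  classical
  have hne : (Finset.univ.filter (fun t : L => u < t ∧ t ≤ v)).Nonempty :=
    ⟨v, by simp [huv]⟩
  obtain ⟨w, hw, hmin⟩ := Finset.exists_minimal hne
  simp only [Finset.mem_filter, Finset.mem_univ, true_and] at hw
  refine ⟨w, ⟨hw.1, fun t ht htw => ?_⟩, hw.2⟩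
  exact absurd (hmin (by simp [ht, le_trans htw.le hw.2]) htw.le) (not_le_of_gt htw)

lemma rho_strict_mono (ρ : L → ℕ) (hcov : ∀ a b : L, a ⋖ b → ρ b = ρ a + 1) :
    ∀ u v : L, u < v → ρ u < ρ v := by
  intro u
  induction u using WellFoundedGT.induction with
  | _ u IH =>
    intro v huv
    obtain ⟨w, hw, hwv⟩ := exists_covBy_le u v huv
    have h1 : ρ u < ρ w := by have := hcov u w hw; omega
    rcases eq_or_lt_of_le hwv with rfl | hlt
    · exact h1
    · exact h1.trans (IH w hw.lt v hlt)

lemma rho_mono (ρ : L → ℕ) (hcov : ∀ a b : L, a ⋖ b → ρ b = ρ a + 1) :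
    ∀ u v : L, u ≤ v → ρ u ≤ ρ v := by
  intro u v h
  rcases eq_or_lt_of_le h with rfl | h
  · exact le_rfl
  · exact (rho_strict_mono ρ hcov u v h).le

/-- The existence part. -/
lemma exists_complement (ρ : L → ℕ) (hρ0 : ρ ⊥ = 0)
    (hcov : ∀ a b : L, a ⋖ b → ρ b = ρ a + 1)
    (hsub : ∀ a b : L, ρ (a ⊔ b) + ρ (a ⊓ b) ≤ ρ a + ρ b)
    (hatom : ∀ x : L, ∃ s : Finset L, (∀ a ∈ s, IsAtom a) ∧ x = s.sup id) :
    ∀ x y : L, x ≤ y → ∃ z : L, z ⊔ x = y ∧ ρ z = ρ y - ρ x := by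
  intro x
  induction x using WellFoundedGT.induction with
  | _ x IH =>
    intro y hxy
    rcases eq_or_lt_of_le hxy with rfl | hlt
    · exact ⟨⊥, by simp, by simp [hρ0]⟩
    · -- find an atom a ≤ y with ¬ a ≤ x
      obtain ⟨s, hs, hys⟩ := hatom y
      have hex : ∃ a ∈ s, ¬ a ≤ x := by
        by_contra h
        push_neg at h
        have : y ≤ x := hys ▸ Finset.sup_le fun a ha => h a ha
        exact absurd this (not_le_of_gt hlt)
      obtain ⟨a, has, hax⟩ := hex
      have hay : a ≤ y := hys ▸ Finset.le_sup (f := id) has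
      have hatoma : IsAtom a := hs a has
      have hρa : ρ a = 1 := by
        have := hcov ⊥ a hatoma.bot_covBy; omega
      have hxa : x ⊓ a = ⊥ := by
        rcases (hatoma.le_iff.mp inf_le_right) with h | h
        · exact h
        · exact absurd (h ▸ inf_le_left) hax
      have hxlt : x < x ⊔ a := lt_of_le_of_ne le_sup_left (fun h => hax (h ▸ le_sup_right))
      have hxaρ : ρ (x ⊔ a) = ρ x + 1 := by
        have h1 := hsub x a
        rw [hxa, hρ0, hρa] at h1
        have h2 := rho_strict_mono ρ hcov x (x ⊔ a) hxlt
        omega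
      have hxay : x ⊔ a ≤ y := sup_le hxy hay
      obtain ⟨z', hz'1, hz'2⟩ := IH (x ⊔ a) hxlt y hxay
      refine ⟨z' ⊔ a, ?_, ?_⟩
      · rw [sup_assoc, sup_comm a x]
        exact hz'1
      · have hub : ρ (z' ⊔ a) ≤ ρ z' + 1 := by
          have := hsub z' a; rw [hρa] at this; omega
        have hlb : ρ y ≤ ρ (z' ⊔ a) + ρ x := by
          have h := hsub (z' ⊔ a) x
          have hz : (z' ⊔ a) ⊔ x = y := by
            rw [sup_assoc, sup_comm a x]; exact hz'1
          rw [hz] at h; omega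
        have hx1y : ρ x + 1 ≤ ρ y := hxaρ ▸ rho_mono ρ hcov _ _ hxay
        omega

end Aux

open scoped Classical in
theorem stmt5 {L : Type*} [Lattice L] [Fintype L] [OrderBot L]
    (ρ : L → ℕ) (hρ0 : ρ ⊥ = 0) (hcov : ∀ a b : L, a ⋖ b → ρ b = ρ a + 1)
    (hsub : ∀ a b : L, ρ (a ⊔ b) + ρ (a ⊓ b) ≤ ρ a + ρ b)
    (hatom : ∀ x : L, ∃ s : Finset L, (∀ a ∈ s, IsAtom a) ∧ x = s.sup id)
    (x y : L) (hxy : x ≤ y) :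
    (∃ z : L, z ⊔ x = y ∧ ρ z = ρ y - ρ x) ∧
    ¬ ((Polynomial.X : Polynomial ℤ) ^ (ρ y - ρ x + 1) ∣ RL ρ x y) := by
  obtain ⟨z₀, hz₀1, hz₀2⟩ := exists_complement ρ hρ0 hcov hsub hatom x y hxy
  refine ⟨⟨z₀, hz₀1, hz₀2⟩, ?_⟩
  set k := ρ y - ρ x with hk
  intro hdvd
  rw [Polynomial.X_pow_dvd_iff] at hdvd
  have hzero := hdvd k (Nat.lt_succ_self k)
  have hcoeff : (RL ρ x y).coeff k =
      ∑ z ∈ Finset.univ.filter (fun z : L => z ⊔ x = y),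
        ((Polynomial.X : Polynomial ℤ) ^ ρ z).coeff k := by
    rw [RL, Polynomial.finset_sum_coeff]
  have hpos : 0 < (RL ρ x y).coeff k := by
    rw [hcoeff]
    apply Finset.sum_pos'
    · intro z hz
      rw [Polynomial.coeff_X_pow]
      split <;> norm_num
    · refine ⟨z₀, by simp [hz₀1], ?_⟩
      simp [Polynomial.coeff_X_pow, hz₀2]
  omega
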